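/- The sequence (5·F_{n²}) is realizable: for every n ∈ ℕ, the quantity ∑_{d|n} μ(n/d)·5·F_{d²} is both non-negative and divisible by n. -/

import Mathlib

open Finset Matrix ArithmeticFunction ArithmeticFunction.Moebius

/-- `P N t` says the Fibonacci matrix has period dividing `t` mod `N`. -/
def P (N t : ℕ) : Prop := (N:ℤ) ∣ (Nat.fib t : ℤ) ∧ (N:ℤ) ∣ (Nat.fib (t+1) : ℤ) - 1

lemma A_pow {R : Type*} [CommRing R] (t : ℕ) :
    (!![1,1;1,0] : Matrix (Fin 2) (Fin 2) R) ^ (t+1) =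
      !![(Nat.fib (t+2) : R), Nat.fib (t+1); Nat.fib (t+1), Nat.fib t] := by
  induction t with
  | zero => norm_num
  | succ t ih =>
    rw [pow_succ, ih, Matrix.mul_fin_two]
    have h1 : Nat.fib (t+3) = Nat.fib (t+1) + Nat.fib (t+2) := Nat.fib_add_two
    have h2 : Nat.fib (t+2) = Nat.fib t + Nat.fib (t+1) := Nat.fib_add_two
    congr 1 <;> push_cast [h1] <;> push_cast [h2] <;> ring

lemma P_one (t : ℕ) : P 1 t := by simp [P]

lemma P_of_matrix {N t : ℕ} (h : (!![1,1;1,0] : Matrix (Fin 2) (Fin 2) (ZMod N)) ^ (t+1) = 1) :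
    P N (t+1) := by
  rw [A_pow, Matrix.one_fin_two] at h
  have h01 := Matrix.ext_iff.mpr h 0 1
  have h00 := Matrix.ext_iff.mpr h 0 0
  simp at h01 h00
  constructor
  · have : ((Nat.fib (t+1) : ℤ) : ZMod N) = 0 := by rw [Int.cast_natCast]; exact h01
    exact (ZMod.intCast_zmod_eq_zero_iff_dvd _ _).mp this
  · have : (((Nat.fib (t+2) : ℤ) - 1 : ℤ) : ZMod N) = 0 := by
      push_cast
      rw [h00]; ring
    exact (ZMod.intCast_zmod_eq_zero_iff_dvd _ _).mp this

lemma matrix_dvd_of_entries {z : ℤ} {M : Matrix (Fin 2) (Fin 2) ℤ}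
    (h : ∀ i j, z ∣ M i j) : ((z : ℤ) : Matrix (Fin 2) (Fin 2) ℤ) ∣ M := by
  refine ⟨Matrix.of (fun i j => M i j / z), ?_⟩
  ext i j
  simp only [← zsmul_eq_mul, Matrix.smul_apply, Matrix.of_apply, smul_eq_mul]
  exact (Int.mul_ediv_cancel' (h i j)).symm

lemma entries_of_matrix_dvd {z : ℤ} {M : Matrix (Fin 2) (Fin 2) ℤ}
    (h : ((z : ℤ) : Matrix (Fin 2) (Fin 2) ℤ) ∣ M) (i j : Fin 2) : z ∣ M i j := by
  obtain ⟨C, rfl⟩ := h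
  rw [← zsmul_eq_mul, Matrix.smul_apply]
  exact Dvd.intro _ rfl

lemma matrix_dvd_of_P {N t : ℕ} (h : P N (t+1)) :
    ((N : ℤ) : Matrix (Fin 2) (Fin 2) ℤ) ∣
      ((!![1,1;1,0] : Matrix (Fin 2) (Fin 2) ℤ) ^ (t+1) - 1) := by
  apply matrix_dvd_of_entries
  rw [A_pow, Matrix.one_fin_two]
  have hfib : (Nat.fib t : ℤ) - 1 = ((Nat.fib (t+2) : ℤ) - 1) - (Nat.fib (t+1) : ℤ) := by
    have h2 : Nat.fib (t+2) = Nat.fib t + Nat.fib (t+1) := Nat.fib_add_two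
    push_cast [h2]; ring
  intro i j
  fin_cases i <;> fin_cases j <;> simp
  · exact h.2
  · exact h.1
  · exact h.1
  · rw [hfib]
    exact dvd_sub h.2 h.1

lemma P_of_matrix_dvd' {N t : ℕ}
    (h : ((N : ℕ) : Matrix (Fin 2) (Fin 2) ℤ) ∣
      ((!![1,1;1,0] : Matrix (Fin 2) (Fin 2) ℤ) ^ (t+1) - 1)) : P N (t+1) := by
  have h' : (((N : ℤ)) : Matrix (Fin 2) (Fin 2) ℤ) ∣
      ((!![1,1;1,0] : Matrix (Fin 2) (Fin 2) ℤ) ^ (t+1) - 1) := by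
    simpa using h
  have h01 := entries_of_matrix_dvd h' 0 1
  have h00 := entries_of_matrix_dvd h' 0 0
  rw [A_pow, Matrix.one_fin_two] at h01 h00
  simp at h01 h00
  exact ⟨by exact_mod_cast h01, by exact_mod_cast h00⟩

lemma matrix_dvd_of_P' {N t : ℕ} (h : P N (t+1)) :
    ((N : ℕ) : Matrix (Fin 2) (Fin 2) ℤ) ∣
      ((!![1,1;1,0] : Matrix (Fin 2) (Fin 2) ℤ) ^ (t+1) - 1) := by
  have := matrix_dvd_of_P h
  simpa using this

section BaseCase
variable {p : ℕ} [hp : Fact p.Prime]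

lemma cast_prime_ne_zero {q : ℕ} (hq : q.Prime) (hne : p ≠ q) : ((q : ℕ) : ZMod p) ≠ 0 := by
  rw [Ne, ZMod.natCast_eq_zero_iff]
  intro h
  exact hne ((Nat.prime_dvd_prime_iff_eq hp.out hq).mp h)

/-- for odd prime `p ≠ 5`, `A^(p²-1) = 1` over `ZMod p`. -/
lemma base_case (hodd : p ≠ 2) (h5 : p ≠ 5) :
    (!![1,1;1,0] : Matrix (Fin 2) (Fin 2) (ZMod p)) ^ (p^2 - 1) = 1 := by
  have hc2 : (2 : ZMod p) ≠ 0 := by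
    have := cast_prime_ne_zero (p := p) Nat.prime_two hodd
    simpa using this
  have hc5 : (5 : ZMod p) ≠ 0 := by
    have := cast_prime_ne_zero (p := p) (by norm_num : Nat.Prime 5) h5
    simpa using this
  set A : Matrix (Fin 2) (Fin 2) (ZMod p) := !![1,1;1,0] with hA
  set s : Matrix (Fin 2) (Fin 2) (ZMod p) := !![1,2;2,-1] with hs
  obtain ⟨h, hph⟩ : ∃ h, p = 2*h+1 := by
    obtain ⟨h, hh⟩ := hp.out.odd_of_ne_two hodd
    exact ⟨h, by omega⟩
  have hs2 : s * s = (5 : ZMod p) • 1 := by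
    rw [hs, Matrix.mul_fin_two, Matrix.one_fin_two, Matrix.smul_of]
    norm_num [Matrix.smul_cons, Matrix.smul_empty]
  have h2A : (2 : ZMod p) • A = 1 + s := by
    rw [hA, hs, Matrix.one_fin_two, Matrix.smul_of]
    ext i j
    fin_cases i <;> fin_cases j <;>
      simp [Matrix.smul_cons, Matrix.smul_empty, Matrix.add_apply] <;> norm_num
  have hspow : s ^ p = ((5 : ZMod p))^h • s := by
    have key : s ^ (2*h+1) = ((5 : ZMod p))^h • s := by
      rw [pow_succ, pow_mul, pow_two, hs2, smul_pow, one_pow, smul_mul_assoc, one_mul]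
    rw [← hph] at key
    exact key
  have hfrob1 : ((2 : ZMod p) • A) ^ p = 1 + (5:ZMod p)^h • s := by
    rw [h2A, add_pow_char_of_commute p (Commute.one_left s), one_pow, hspow]
  have hfrob2 : ((2 : ZMod p) • A) ^ (p^2) = 1 + s := by
    rw [pow_two, mul_comm p p, pow_mul, hfrob1,
      add_pow_char_of_commute p (Commute.one_left _), one_pow, smul_pow, hspow, smul_smul]
    have hsc : ((5:ZMod p)^h) ^ p * (5:ZMod p) ^ h = 1 := by
      rw [ZMod.pow_card, ← pow_add]
      have he : h + h = p - 1 := by omega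
      rw [he, ZMod.pow_card_sub_one_eq_one hc5]
    rw [hsc, one_smul]
  have hApow : A ^ (p^2) = A := by
    have h1 : ((2:ZMod p) • A) ^ (p^2) = (2:ZMod p)^(p^2) • A ^ (p^2) := smul_pow _ _ _
    have h2 : (2:ZMod p)^(p^2) = 2 := by
      rw [pow_two, pow_mul, ZMod.pow_card, ZMod.pow_card]
    rw [h2] at h1
    rw [hfrob2, ← h2A] at h1
    exact (smul_right_injective _ hc2 h1.symm)
  have hinv : A * (A - 1) = 1 := by
    rw [hA, Matrix.one_fin_two]
    ext i j
    fin_cases i <;> fin_cases j <;>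
      simp [Matrix.mul_apply, Fin.sum_univ_two, Matrix.sub_apply]
  have hp2 : p^2 - 1 + 1 = p^2 := by
    have := hp.out.two_le
    have : 2 ≤ p^2 := by nlinarith
    omega
  calc A ^ (p^2-1) = A ^ (p^2-1) * (A * (A - 1)) := by rw [hinv, mul_one]
    _ = (A ^ (p^2-1) * A) * (A - 1) := by rw [mul_assoc]
    _ = A ^ (p^2) * (A-1) := by rw [← pow_succ, hp2]
    _ = A * (A - 1) := by rw [hApow]
    _ = 1 := hinv

end BaseCase

lemma P_lift {p : ℕ} (hp : p.Prime) {k t : ℕ} (hk : 1 ≤ k) (ht : 1 ≤ t) (h : P (p^k) t) :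
    P (p^(k+1)) (t*p) := by
  cases t with
  | zero => omega
  | succ t =>
    obtain ⟨s, hs⟩ : ∃ s, (t+1)*p = s+1 :=
      ⟨(t+1)*p - 1, (Nat.succ_pred_eq_of_pos (Nat.mul_pos (Nat.succ_pos t) hp.pos)).symm⟩
    rw [hs]
    apply P_of_matrix_dvd'
    set A : Matrix (Fin 2) (Fin 2) ℤ := !![1,1;1,0] with hA
    set B : Matrix (Fin 2) (Fin 2) ℤ := A^(t+1) - 1 with hB
    have hdvdB : ((p^k : ℕ) : Matrix (Fin 2) (Fin 2) ℤ) ∣ B := matrix_dvd_of_P' h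
    have hAB : A^(s+1) = (B + 1)^p := by
      rw [← hs, pow_mul]
      congr 1
      rw [hB, sub_add_cancel]
    have hbin : (B + 1)^p = ∑ m ∈ range (p+1), B^m * (p.choose m : Matrix (Fin 2) (Fin 2) ℤ) := by
      have := (Commute.one_right B).add_pow p
      simpa using this
    have hsum : A^(s+1) - 1
        = ∑ i ∈ range p, B^(i+1) * (p.choose (i+1) : Matrix (Fin 2) (Fin 2) ℤ) := by
      rw [hAB, hbin, Finset.sum_range_succ']
      simp
    rw [hsum]
    apply Finset.dvd_sum
    intro i _
    have hcast : ((p^(k+1) : ℕ) : Matrix (Fin 2) (Fin 2) ℤ)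
        = ((p^k : ℕ) : Matrix (Fin 2) (Fin 2) ℤ) * ((p : ℕ) : Matrix (Fin 2) (Fin 2) ℤ) := by
      rw [pow_succ, Nat.cast_mul]
    rcases Nat.eq_zero_or_pos i with rfl | hi
    · simp only [zero_add, pow_one, Nat.choose_one_right]
      rw [hcast]
      obtain ⟨E, hE⟩ := hdvdB
      exact ⟨E, by rw [hE, mul_assoc, ← (Nat.cast_commute p E).eq, ← mul_assoc]⟩
    · have h1 : (((p^k : ℕ) : Matrix (Fin 2) (Fin 2) ℤ))^(i+1) ∣ B^(i+1) := by
        obtain ⟨E, hE⟩ := hdvdB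
        exact ⟨E^(i+1), by rw [hE, (Nat.cast_commute (p^k) E).mul_pow]⟩
      have h2 : ((p^(k+1) : ℕ) : Matrix (Fin 2) (Fin 2) ℤ)
          ∣ (((p^k : ℕ) : Matrix (Fin 2) (Fin 2) ℤ))^(i+1) := by
        have hnat : p^(k+1) ∣ (p^k)^(i+1) := by
          rw [← pow_mul]
          exact pow_dvd_pow p (by nlinarith)
        have := map_dvd (Nat.castRingHom (Matrix (Fin 2) (Fin 2) ℤ)) hnat
        simpa using this
      exact ((h2.trans h1).mul_right _)

lemma fib_step {N t : ℕ} (h : P N t) (m : ℕ) :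
    (N:ℤ) ∣ (Nat.fib (m + t) : ℤ) - Nat.fib m := by
  cases m with
  | zero => simpa using h.1
  | succ m =>
    have key : Nat.fib (m + t + 1) = Nat.fib m * Nat.fib t + Nat.fib (m+1) * Nat.fib (t+1) :=
      Nat.fib_add m t
    have : (Nat.fib (m + 1 + t) : ℤ) - Nat.fib (m+1)
        = (Nat.fib m : ℤ) * Nat.fib t + (Nat.fib (m+1) : ℤ) * ((Nat.fib (t+1) : ℤ) - 1) := by
      rw [show m + 1 + t = m + t + 1 by omega, key]
      push_cast
      ring
    rw [this]
    exact dvd_add (Dvd.dvd.mul_left h.1 _) (Dvd.dvd.mul_left h.2 _)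

lemma fib_period {N t : ℕ} (h : P N t) (b j : ℕ) :
    (N:ℤ) ∣ (Nat.fib (b + t*j) : ℤ) - Nat.fib b := by
  induction j with
  | zero => simp
  | succ j ih =>
    have h1 := fib_step h (b + t*j)
    have : (Nat.fib (b + t*(j+1)) : ℤ) - Nat.fib b
        = ((Nat.fib (b + t*j + t) : ℤ) - Nat.fib (b + t*j))
          + ((Nat.fib (b + t*j) : ℤ) - Nat.fib b) := by
      rw [show b + t*(j+1) = b + t*j + t by ring]
      ring
    rw [this]
    exact dvd_add h1 ih

lemma P2 : P 2 3 := by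
  constructor <;>
    norm_num [P, show Nat.fib 3 = 2 from rfl, show Nat.fib 4 = 3 from rfl]

lemma P5 : P 5 20 := by
  constructor <;>
    norm_num [P, show Nat.fib 20 = 6765 from rfl, show Nat.fib 21 = 10946 from rfl]

lemma P_base {p : ℕ} (hp : p.Prime) (h5 : p ≠ 5) : P p (p^2 - 1) := by
  rcases eq_or_ne p 2 with rfl | hodd
  · simpa using P2
  · haveI : Fact p.Prime := ⟨hp⟩
    have h4 : 4 ≤ p^2 := by
      calc 4 = 2^2 := by norm_num
        _ ≤ p^2 := Nat.pow_le_pow_left hp.two_le 2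
    have h2 : p^2 - 1 = (p^2 - 2) + 1 := by omega
    rw [h2]
    apply P_of_matrix
    rw [← h2]
    exact base_case hodd h5

lemma P_chain {p t : ℕ} (hp : p.Prime) (ht : 1 ≤ t) (h : P p t) (j : ℕ) :
    P (p^(j+1)) (t * p^j) := by
  induction j with
  | zero => simpa using h
  | succ j ih =>
    have := P_lift hp (k := j+1) (Nat.le_add_left 1 j)
        (Nat.le_trans ht (Nat.le_mul_of_pos_right t (pow_pos hp.pos j))) ih
    rw [mul_assoc, ← pow_succ] at this
    exact this

lemma key {p : ℕ} (hp : p.Prime) (k e : ℕ) :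
    ((p^(k+1) : ℕ) : ℤ) ∣ 5 * (Nat.fib ((p^(k+1)*e)^2) : ℤ) - 5 * (Nat.fib ((p^k*e)^2) : ℤ) := by
  rcases eq_or_ne p 5 with rfl | h5
  · cases k with
    | zero =>
      have h0 : ((5:ℕ):ℤ) ∣ 5 * (Nat.fib ((5^(0+1)*e)^2) : ℤ) - 5 * (Nat.fib ((5^0*e)^2) : ℤ) := by
        rw [show (5:ℤ) * (Nat.fib ((5^(0+1)*e)^2):ℤ) - 5 * (Nat.fib ((5^0*e)^2):ℤ)
            = 5 * ((Nat.fib ((5^(0+1)*e)^2):ℤ) - (Nat.fib ((5^0*e)^2):ℤ)) by ring]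
        exact Dvd.dvd.mul_right (by norm_num) _
      simpa using h0
    | succ k =>
      have hP : P (5^(k+1)) (20 * 5^k) := P_chain hp (by norm_num) P5 k
      have hod : (5^(k+1+1)*e)^2 = (5^(k+1)*e)^2 + (20*5^k)*(6*5^(k+1)*e^2) := by ring
      have hper := fib_period hP ((5^(k+1)*e)^2) (6*5^(k+1)*e^2)
      rw [← hod] at hper
      have h5d : ((5^(k+1+1) : ℕ) : ℤ)
          ∣ 5 * ((Nat.fib ((5^(k+1+1)*e)^2) : ℤ) - (Nat.fib ((5^(k+1)*e)^2) : ℤ)) := by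
        have hc : ((5^(k+1+1) : ℕ) : ℤ) = 5 * ((5^(k+1) : ℕ) : ℤ) := by push_cast; ring
        rw [hc]
        exact mul_dvd_mul_left 5 hper
      rw [show (5:ℤ) * (Nat.fib ((5^(k+1+1)*e)^2):ℤ) - 5 * (Nat.fib ((5^(k+1)*e)^2):ℤ)
          = 5 * ((Nat.fib ((5^(k+1+1)*e)^2):ℤ) - (Nat.fib ((5^(k+1)*e)^2):ℤ)) by ring]
      exact h5d
  · have h4 : 4 ≤ p^2 := by
      calc 4 = 2^2 := by norm_num
        _ ≤ p^2 := Nat.pow_le_pow_left hp.two_le 2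
    have ht1 : 1 ≤ p^2 - 1 := by omega
    have hP : P (p^(k+1)) ((p^2-1) * p^k) := P_chain hp ht1 (P_base hp h5) k
    have hidx : (p^(k+1)*e)^2 = (p^k*e)^2 + ((p^2-1)*p^k)*(p^k*e^2) := by
      have ht' : (p^2-1) + 1 = p^2 := by omega
      calc (p^(k+1)*e)^2 = ((p^2-1)+1) * (p^k*e)^2 := by rw [ht']; ring
        _ = (p^k*e)^2 + (p^2-1)*(p^k*e)^2 := by ring
        _ = (p^k*e)^2 + ((p^2-1)*p^k)*(p^k*e^2) := by ring
    rw [hidx]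
    have := fib_period hP ((p^k*e)^2) (p^k*e^2)
    rw [show (5:ℤ)*(Nat.fib ((p^k*e)^2 + ((p^2-1)*p^k)*(p^k*e^2)) : ℤ)
          - 5*(Nat.fib ((p^k*e)^2) : ℤ)
        = 5*((Nat.fib ((p^k*e)^2 + ((p^2-1)*p^k)*(p^k*e^2)) : ℤ)
          - (Nat.fib ((p^k*e)^2) : ℤ)) by ring]
    exact Dvd.dvd.mul_left this 5

lemma sum_divisors_coprime_mul {m₁ m₂ : ℕ} (h : m₁.Coprime m₂) (g : ℕ → ℤ) :
    ∑ d ∈ (m₁*m₂).divisors, g d = ∑ a ∈ m₁.divisors, ∑ b ∈ m₂.divisors, g (a*b) := by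
  rw [← Finset.sum_product']
  apply Finset.sum_nbij' (i := fun d => (d.gcd m₁, d.gcd m₂)) (j := fun x => x.1 * x.2)
  · intro d hd
    rw [Nat.mem_divisors] at hd
    rw [Finset.mem_product, Nat.mem_divisors, Nat.mem_divisors]
    have hne : m₁ ≠ 0 ∧ m₂ ≠ 0 := by
      constructor <;> [rintro rfl; rintro rfl] <;> simp at hd
    exact ⟨⟨Nat.gcd_dvd_right _ _, hne.1⟩, ⟨Nat.gcd_dvd_right _ _, hne.2⟩⟩
  · intro x hx
    rw [Finset.mem_product, Nat.mem_divisors, Nat.mem_divisors] at hx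
    rw [Nat.mem_divisors]
    exact ⟨mul_dvd_mul hx.1.1 hx.2.1, mul_ne_zero hx.1.2 hx.2.2⟩
  · intro d hd
    rw [Nat.mem_divisors] at hd
    exact (Nat.gcd_mul_gcd_eq_iff_dvd_mul_of_coprime h).mpr hd.1
  · rintro ⟨a, b⟩ hx
    rw [Finset.mem_product, Nat.mem_divisors, Nat.mem_divisors] at hx
    have hb1 : b.Coprime m₁ := (h.symm.coprime_dvd_left hx.2.1)
    have ha2 : a.Coprime m₂ := (h.coprime_dvd_left hx.1.1)
    have e1 : (a*b).gcd m₁ = a := by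
      rw [Nat.Coprime.gcd_mul_right_cancel a hb1]
      exact Nat.gcd_eq_left hx.1.1
    have e2 : (a*b).gcd m₂ = b := by
      rw [mul_comm, Nat.Coprime.gcd_mul_right_cancel b ha2]
      exact Nat.gcd_eq_left hx.2.1
    simp [e1, e2]
  · intro d hd
    rw [Nat.mem_divisors] at hd
    have e := (Nat.gcd_mul_gcd_eq_iff_dvd_mul_of_coprime h).mpr hd.1
    simp only []
    rw [e]

lemma inner_sum' {p : ℕ} (hp : p.Prime) : ∀ (K : ℕ) (v : ℕ → ℤ),
    ∑ j ∈ Finset.range (K+2), (μ (p^(K+1-j)) : ℤ) * v j = v (K+1) - v K := by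
  intro K
  induction K with
  | zero =>
    intro v
    simp [Finset.sum_range_succ, moebius_apply_prime hp]
    ring
  | succ K ih =>
    intro v
    rw [Finset.sum_range_succ']
    have h0 : (μ (p^(K+2-0)) : ℤ) * v 0 = 0 := by
      rw [moebius_apply_prime_pow hp (by omega), if_neg (by omega)]
      ring
    have hcongr : ∀ j ∈ Finset.range (K+2), (μ (p^(K+2-(j+1))) : ℤ) * v (j+1)
        = (μ (p^(K+1-j)) : ℤ) * (v ∘ Nat.succ) j := by
      intro j hj
      have : K+2-(j+1) = K+1-j := by omega
      rw [this]
      rfl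
    calc ∑ j ∈ Finset.range (K+2), (μ (p^(K+2-(j+1))) : ℤ) * v (j+1) + (μ (p^(K+2-0)) : ℤ) * v 0
        = ∑ j ∈ Finset.range (K+2), (μ (p^(K+1-j)) : ℤ) * (v ∘ Nat.succ) j := by
          rw [h0, add_zero]; exact Finset.sum_congr rfl hcongr
      _ = (v ∘ Nat.succ) (K+1) - (v ∘ Nat.succ) K := ih _
      _ = v (K+2) - v (K+1) := rfl

lemma ppow_dvd_S {n : ℕ} (hn : 0 < n) {p : ℕ} (hp : p.Prime) (hpn : p ∣ n) :
    ((p ^ n.factorization p : ℕ) : ℤ) ∣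
      ∑ d ∈ n.divisors, (μ (n/d) : ℤ) * (5 * (Nat.fib (d^2) : ℤ)) := by
  obtain ⟨K, hK⟩ : ∃ K, n.factorization p = K + 1 :=
    ⟨n.factorization p - 1, by
      have := (hp.factorization_pos_of_dvd hn.ne' hpn)
      omega⟩
  set m : ℕ := n / p ^ n.factorization p with hm
  have hmn : n = p ^ n.factorization p * m := (Nat.ordProj_mul_ordCompl_eq_self n p).symm
  have hcop : (p ^ n.factorization p).Coprime m :=
    Nat.Coprime.pow_left _ (Nat.coprime_ordCompl hp hn.ne')
  have hpm : ¬ p ∣ m := Nat.not_dvd_ordCompl hp hn.ne'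
  rw [hK] at hmn hcop ⊢
  calc ((p ^ (K+1) : ℕ) : ℤ)
      ∣ ∑ b ∈ m.divisors, (μ (m/b) : ℤ) *
          (5 * (Nat.fib ((p^(K+1)*b)^2) : ℤ) - 5 * (Nat.fib ((p^K*b)^2) : ℤ)) := by
        apply Finset.dvd_sum
        intro b hb
        exact Dvd.dvd.mul_left (key hp K b) _
    _ = ∑ d ∈ n.divisors, (μ (n/d) : ℤ) * (5 * (Nat.fib (d^2) : ℤ)) := by
        conv_rhs => rw [hmn]
        rw [sum_divisors_coprime_mul hcop]
        rw [Nat.divisors_prime_pow hp]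
        rw [Finset.sum_map]
        simp only [Function.Embedding.coeFn_mk]
        rw [Finset.sum_comm]
        apply Finset.sum_congr rfl
        intro b hb
        rw [Nat.mem_divisors] at hb
        have hbdvd := hb.1
        have hbne : b ≠ 0 := by
          rintro rfl
          exact hb.2 (zero_dvd_iff.mp hbdvd)
        have hdiv : ∀ j ∈ Finset.range (K+2), (μ (p^(K+1) * m / (p^j * b)) : ℤ) *
            (5 * (Nat.fib ((p^j*b)^2) : ℤ))
            = (μ (m/b) : ℤ) * ((μ (p^(K+1-j)) : ℤ) * (5 * (Nat.fib ((p^j*b)^2) : ℤ))) := by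
          intro j hj
          rw [Finset.mem_range] at hj
          have hdq : p^(K+1) * m / (p^j * b) = p^(K+1-j) * (m/b) := by
            rw [← Nat.pow_div (by omega : j ≤ K+1) hp.pos,
              Nat.div_mul_div_comm (pow_dvd_pow p (by omega)) hbdvd]
          have hco2 : (p^(K+1-j)).Coprime (m/b) :=
            Nat.Coprime.pow_left _ ((Nat.Prime.coprime_iff_not_dvd hp).mpr
              (fun hd => hpm (hd.trans (Nat.div_dvd_of_dvd hbdvd))))
          rw [hdq, isMultiplicative_moebius.map_mul_of_coprime hco2]
          push_cast
          ring
        rw [Finset.sum_congr rfl hdiv, ← Finset.mul_sum,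
          inner_sum' hp K (fun j => 5 * (Nat.fib ((p^j*b)^2) : ℤ))]

lemma dvd_of_prime_pows {n : ℕ} (hn : n ≠ 0) {z : ℤ}
    (h : ∀ p, p.Prime → p ∣ n → ((p ^ n.factorization p : ℕ) : ℤ) ∣ z) : (n:ℤ) ∣ z := by
  rcases eq_or_ne z 0 with rfl | hz
  · exact dvd_zero _
  rw [Int.natCast_dvd]
  have hM : z.natAbs ≠ 0 := Int.natAbs_ne_zero.mpr hz
  rw [← Nat.factorization_le_iff_dvd hn hM]
  rw [Finsupp.le_def]
  intro p
  rcases Nat.eq_zero_or_pos (n.factorization p) with h0 | hpos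
  · simp [h0]
  have hmem : p ∈ n.primeFactors := by
    rw [← Nat.support_factorization]
    exact Finsupp.mem_support_iff.mpr hpos.ne'
  have hp : p.Prime := Nat.prime_of_mem_primeFactors hmem
  have hpn : p ∣ n := Nat.dvd_of_mem_primeFactors hmem
  have := h p hp hpn
  rw [Int.natCast_dvd] at this
  exact (hp.pow_dvd_iff_le_factorization hM).mp this

lemma fib_growth (m j : ℕ) : 2^j * Nat.fib m ≤ Nat.fib (m + 2*j) := by
  induction j with
  | zero => simp
  | succ j ih =>
    have h1 : Nat.fib (m + 2*j + 2) = Nat.fib (m + 2*j) + Nat.fib (m + 2*j + 1) :=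
      Nat.fib_add_two
    have h2 : Nat.fib (m + 2*j) ≤ Nat.fib (m + 2*j + 1) := Nat.fib_le_fib_succ
    calc 2^(j+1) * Nat.fib m = 2 * (2^j * Nat.fib m) := by ring
      _ ≤ 2 * Nat.fib (m + 2*j) := by omega
      _ ≤ Nat.fib (m + 2*(j+1)) := by
          rw [show m + 2*(j+1) = m + 2*j + 2 by ring]
          omega

lemma crude_bound {n : ℕ} (hn : 2 ≤ n) : n * Nat.fib ((n/2)^2) ≤ Nat.fib (n^2) := by
  rcases eq_or_ne n 2 with rfl | hne
  · show 2 * Nat.fib 1 ≤ Nat.fib 4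
    rw [show Nat.fib 1 = 1 from rfl, show Nat.fib 4 = 3 from rfl]
    omega
  have hq : (n/2)^2 + 2*n ≤ n^2 := by
    have h3 : 3 ≤ n := by omega
    have hq2 : (n/2)*2 ≤ n := Nat.div_mul_le_self n 2
    have hA : ((n/2)*2)*((n/2)*2) ≤ n*n := Nat.mul_le_mul hq2 hq2
    have hB : 3*n ≤ n*n := Nat.mul_le_mul_right n h3
    nlinarith [hA, hB]
  calc n * Nat.fib ((n/2)^2) ≤ 2^n * Nat.fib ((n/2)^2) := by
        have := @Nat.lt_two_pow_self n
        exact Nat.mul_le_mul_right _ (le_of_lt this)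
    _ ≤ Nat.fib ((n/2)^2 + 2*n) := fib_growth _ n
    _ ≤ Nat.fib (n^2) := Nat.fib_mono hq

lemma S_nonneg (n : ℕ) (hn : 0 < n) :
    0 ≤ ∑ d ∈ n.divisors, (μ (n/d) : ℤ) * (5 * (Nat.fib (d^2) : ℤ)) := by
  rcases eq_or_ne n 1 with rfl | hne
  · simp
  have h2 : 2 ≤ n := by omega
  rw [← Nat.cons_self_properDivisors hn.ne', Finset.sum_cons]
  set q := n/2 with hqdef
  have hbound : ∀ d ∈ n.properDivisors,
      -(5 * (Nat.fib (q^2) : ℤ)) ≤ (μ (n/d) : ℤ) * (5 * (Nat.fib (d^2) : ℤ)) := by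
    intro d hd
    rw [Nat.mem_properDivisors] at hd
    have hdq : d ≤ q := by
      obtain ⟨c, hc⟩ := hd.1
      have hc2 : 2 ≤ c := by
        rcases Nat.lt_or_ge c 2 with h | h
        · interval_cases c <;> omega
        · exact h
      have : 2*d ≤ n := by nlinarith [hd.2]
      omega
    have hfib : (Nat.fib (d^2) : ℤ) ≤ (Nat.fib (q^2) : ℤ) := by
      exact_mod_cast Nat.fib_mono (Nat.pow_le_pow_left hdq 2)
    have hfib0 : (0:ℤ) ≤ (Nat.fib (d^2) : ℤ) := by positivity
    have hμ : (μ (n/d) : ℤ) = 1 ∨ (μ (n/d) : ℤ) = -1 ∨ (μ (n/d) : ℤ) = 0 := by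
      by_cases hsf : Squarefree (n/d)
      · rcases neg_one_pow_eq_or ℤ (cardFactors (n/d)) with h | h
        · left; rw [moebius_apply_of_squarefree hsf]; exact h
        · right; left; rw [moebius_apply_of_squarefree hsf]; exact h
      · right; right; rw [moebius_eq_zero_of_not_squarefree hsf]
    rcases hμ with h | h | h <;> rw [h] <;> nlinarith
  have hcard : n.properDivisors.card ≤ n := by
    calc n.properDivisors.card ≤ (Finset.range n).card := by
          apply Finset.card_le_card
          intro d hd
          rw [Finset.mem_range]
          exact (Nat.mem_properDivisors.mp hd).2
      _ = n := Finset.card_range n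
  have hsum : (n.properDivisors.card : ℤ) • (-(5 * (Nat.fib (q^2) : ℤ)))
      ≤ ∑ d ∈ n.properDivisors, (μ (n/d) : ℤ) * (5 * (Nat.fib (d^2) : ℤ)) := by
    have := Finset.card_nsmul_le_sum n.properDivisors
      (fun d => (μ (n/d) : ℤ) * (5 * (Nat.fib (d^2) : ℤ)))
      (-(5 * (Nat.fib (q^2) : ℤ))) hbound
    exact_mod_cast this
  have hlast : (μ (n/n) : ℤ) * (5 * (Nat.fib (n^2) : ℤ)) = 5 * (Nat.fib (n^2) : ℤ) := by
    rw [Nat.div_self hn, moebius_apply_one]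
    ring
  rw [hlast]
  have hgrow : (n:ℤ) * (Nat.fib (q^2) : ℤ) ≤ (Nat.fib (n^2) : ℤ) := by
    exact_mod_cast crude_bound h2
  have hc : ((n.properDivisors.card : ℤ)) ≤ (n:ℤ) := by exact_mod_cast hcard
  have hfq0 : (0:ℤ) ≤ (Nat.fib (q^2) : ℤ) := by positivity
  rw [smul_eq_mul] at hsum
  nlinarith [hsum, hgrow, hc, hfq0]

open ArithmeticFunction ArithmeticFunction.Moebius in
theorem five_fib_sq_realizable (n : ℕ) (hn : 0 < n) :
    0 ≤ ∑ d ∈ n.divisors, μ (n / d) * (5 * Nat.fib (d ^ 2)) ∧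
    (n : ℤ) ∣ ∑ d ∈ n.divisors, μ (n / d) * (5 * Nat.fib (d ^ 2)) := by
  constructor
  · exact S_nonneg n hn
  · exact dvd_of_prime_pows hn.ne' (fun p hp hpn => ppow_dvd_S hn hp hpn)
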